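/- Let A be an n×n matrix over the field Z/2Z such that A_{i,j} + A_{j,i} = 1 for all i ≠ j (a tournament matrix over Z/2Z). Then the rank of A over Z/2Z is at least (n-1)/2. -/
import Mathlib

lemma my_rank_add_le {n : ℕ} (A B : Matrix (Fin n) (Fin n) (ZMod 2)) :
    (A + B).rank ≤ A.rank + B.rank := by
  unfold Matrix.rank
  have hle : LinearMap.range (A + B).mulVecLin ≤
      LinearMap.range A.mulVecLin ⊔ LinearMap.range B.mulVecLin := by
    rintro x ⟨v, rfl⟩
    rw [Matrix.mulVecLin_add]
    exact Submodule.add_mem_sup ⟨v, rfl⟩ ⟨v, rfl⟩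
  exact (Submodule.finrank_mono hle).trans
    (Submodule.finrank_add_le_finrank_add_finrank _ _)

/-- A tournament matrix over `ZMod 2` has rank at least `(n-1)/2`. -/
theorem stmt_0 (n : ℕ) (A : Matrix (Fin n) (Fin n) (ZMod 2))
    (hA : ∀ i j : Fin n, i ≠ j → A i j + A j i = 1) :
    (n - 1) / 2 ≤ A.rank := by
  set J : Matrix (Fin n) (Fin n) (ZMod 2) := Matrix.of fun _ _ => 1 with hJ
  have hJrank : J.rank ≤ 1 := by
    have : J = Matrix.replicateCol (Fin 1) (fun _ => (1:ZMod 2)) * Matrix.replicateRow (Fin 1) (fun _ => (1:ZMod 2)) := by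
      ext i j
      simp [hJ, Matrix.mul_apply, Matrix.replicateCol, Matrix.replicateRow]
    rw [this]
    exact (Matrix.rank_mul_le_left _ _).trans
      ((Matrix.rank_le_card_width _).trans (by simp))
  have hsum : A + A.transpose = J + 1 := by
    ext i j
    by_cases h : i = j
    · subst h
      simp [hJ, Matrix.transpose_apply, Matrix.one_apply]
      ring_nf
      rw [show (2 : ZMod 2) = 0 by decide, mul_zero]
    · simp [hJ, Matrix.transpose_apply, Matrix.one_apply, h, hA i j h]
  have h1 : J + (J + 1) = (1 : Matrix (Fin n) (Fin n) (ZMod 2)) := by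
    ext i j
    by_cases h : i = j <;> simp [hJ, Matrix.one_apply, h] <;> decide
  have hn : n ≤ 1 + (A.rank + A.rank) := by
    calc n = (1 : Matrix (Fin n) (Fin n) (ZMod 2)).rank := by
              rw [Matrix.rank_one, Fintype.card_fin]
      _ = (J + (J + 1)).rank := by rw [h1]
      _ ≤ J.rank + (J + 1).rank := my_rank_add_le _ _
      _ ≤ 1 + (A + A.transpose).rank := by rw [← hsum]; exact add_le_add hJrank le_rfl
      _ ≤ 1 + (A.rank + A.transpose.rank) := by
            exact add_le_add le_rfl (my_rank_add_le _ _)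
      _ = 1 + (A.rank + A.rank) := by rw [Matrix.rank_transpose]
  have : n - 1 ≤ 2 * A.rank := by omega
  omega
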